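/- For any integers n_1, n_2 ≥ 3, the 2-dimensional grid graph G_{n_1,n_2} is not a star-1-PCG. -/

import Mathlib

/-- The 2-dimensional grid graph on `Fin n₁ × Fin n₂`: two vertices are adjacent
iff they differ by exactly 1 in exactly one coordinate. -/
def gridGraph (n₁ n₂ : ℕ) : SimpleGraph (Fin n₁ × Fin n₂) where
  Adj u v := |(u.1 : ℤ) - v.1| + |(u.2 : ℤ) - v.2| = 1
  symm := ⟨by intro u v h; simpa [abs_sub_comm] using h⟩
  loopless := ⟨by intro u h; simp at h⟩

/-- A graph is a star-1-PCG if there are nonnegative vertex weights and one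
interval of nonnegative reals such that two distinct vertices are adjacent iff
the sum of their weights lies in the interval. -/
def IsStar1PCG {V : Type*} (G : SimpleGraph V) : Prop :=
  ∃ (w : V → ℝ) (I : Set ℝ),
    (∀ v, 0 ≤ w v) ∧ I.OrdConnected ∧ I ⊆ Set.Ici 0 ∧
    (∀ a b : V, a ≠ b → (G.Adj a b ↔ w a + w b ∈ I))

theorem stmt8 (n₁ n₂ : ℕ) (hn₁ : 3 ≤ n₁) (hn₂ : 3 ≤ n₂) :
    ¬ IsStar1PCG (gridGraph n₁ n₂) := by
  rintro ⟨w, I, -, hconn, -, hadj⟩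
  have key : ∀ s : ℝ, s ∉ I → ∀ t1 ∈ I, ∀ t2 ∈ I, s < t1 ∨ t2 < s := by
    intro s hs t1 ht1 t2 ht2
    by_contra hcon
    push_neg at hcon
    exact hs (hconn.out ht1 ht2 ⟨hcon.1, hcon.2⟩)
  set a : Fin n₁ × Fin n₂ := (⟨0, by omega⟩, ⟨0, by omega⟩) with ha
  set b : Fin n₁ × Fin n₂ := (⟨0, by omega⟩, ⟨1, by omega⟩) with hb
  set c : Fin n₁ × Fin n₂ := (⟨0, by omega⟩, ⟨2, by omega⟩) with hc
  set d : Fin n₁ × Fin n₂ := (⟨1, by omega⟩, ⟨0, by omega⟩) with hd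
  set e : Fin n₁ × Fin n₂ := (⟨1, by omega⟩, ⟨1, by omega⟩) with he
  set f : Fin n₁ × Fin n₂ := (⟨1, by omega⟩, ⟨2, by omega⟩) with hf
  set g : Fin n₁ × Fin n₂ := (⟨2, by omega⟩, ⟨0, by omega⟩) with hg
  set h : Fin n₁ × Fin n₂ := (⟨2, by omega⟩, ⟨1, by omega⟩) with hh
  -- edges
  have tad : w a + w d ∈ I := (hadj a d (by simp [ha, hd, Prod.ext_iff, Fin.ext_iff])).mp
    (by simp [gridGraph, ha, hd])
  have tcf : w c + w f ∈ I := (hadj c f (by simp [hc, hf, Prod.ext_iff, Fin.ext_iff])).mp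
    (by simp [gridGraph, hc, hf])
  have tdg : w d + w g ∈ I := (hadj d g (by simp [hd, hg, Prod.ext_iff, Fin.ext_iff])).mp
    (by simp [gridGraph, hd, hg])
  have tab : w a + w b ∈ I := (hadj a b (by simp [ha, hb, Prod.ext_iff, Fin.ext_iff])).mp
    (by simp [gridGraph, ha, hb])
  have tgh : w g + w h ∈ I := (hadj g h (by simp [hg, hh, Prod.ext_iff, Fin.ext_iff])).mp
    (by simp [gridGraph, hg, hh])
  have tef : w e + w f ∈ I := (hadj e f (by simp [he, hf, Prod.ext_iff, Fin.ext_iff])).mp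
    (by simp [gridGraph, he, hf])
  have tbe : w b + w e ∈ I := (hadj b e (by simp [hb, he, Prod.ext_iff, Fin.ext_iff])).mp
    (by simp [gridGraph, hb, he])
  have teh : w e + w h ∈ I := (hadj e h (by simp [he, hh, Prod.ext_iff, Fin.ext_iff])).mp
    (by simp [gridGraph, he, hh])
  -- non-edges
  have saf : w a + w f ∉ I := fun hm =>
    (by simp [gridGraph, ha, hf] : ¬ (gridGraph n₁ n₂).Adj a f)
      ((hadj a f (by simp [ha, hf, Prod.ext_iff, Fin.ext_iff])).mpr hm)
  have scd : w c + w d ∉ I := fun hm =>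
    (by simp [gridGraph, hc, hd] : ¬ (gridGraph n₁ n₂).Adj c d)
      ((hadj c d (by simp [hc, hd, Prod.ext_iff, Fin.ext_iff])).mpr hm)
  have sgf : w g + w f ∉ I := fun hm =>
    (by simp [gridGraph, hg, hf] : ¬ (gridGraph n₁ n₂).Adj g f)
      ((hadj g f (by simp [hg, hf, Prod.ext_iff, Fin.ext_iff])).mpr hm)
  have sah : w a + w h ∉ I := fun hm =>
    (by simp [gridGraph, ha, hh] : ¬ (gridGraph n₁ n₂).Adj a h)
      ((hadj a h (by simp [ha, hh, Prod.ext_iff, Fin.ext_iff])).mpr hm)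
  have sgb : w g + w b ∉ I := fun hm =>
    (by simp [gridGraph, hg, hb] : ¬ (gridGraph n₁ n₂).Adj g b)
      ((hadj g b (by simp [hg, hb, Prod.ext_iff, Fin.ext_iff])).mpr hm)
  have d1 := key _ saf _ tef _ tad
  have d2 := key _ saf _ tad _ tef
  have d3 := key _ scd _ tcf _ tcf
  have d4 := key _ sgf _ tef _ tdg
  have d5 := key _ sgf _ tdg _ tef
  have d6 := key _ sah _ teh _ tab
  have d7 := key _ sah _ tab _ teh
  have d8 := key _ sgb _ tbe _ tgh
  have d9 := key _ sgb _ tgh _ tbe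
  have Daf : (w a + w f < w e + w f ∧ w a + w f < w a + w d) ∨
      (w e + w f < w a + w f ∧ w a + w d < w a + w f) := by
    rcases d1 with h1 | h1 <;> rcases d2 with h2 | h2
    · exact Or.inl ⟨h1, h2⟩
    · exfalso; linarith
    · exfalso; linarith
    · exact Or.inr ⟨h2, h1⟩
  have Dgf : (w g + w f < w e + w f ∧ w g + w f < w d + w g) ∨
      (w e + w f < w g + w f ∧ w d + w g < w g + w f) := by
    rcases d4 with h1 | h1 <;> rcases d5 with h2 | h2
    · exact Or.inl ⟨h1, h2⟩
    · exfalso; linarith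
    · exfalso; linarith
    · exact Or.inr ⟨h2, h1⟩
  have Dah : (w a + w h < w e + w h ∧ w a + w h < w a + w b) ∨
      (w e + w h < w a + w h ∧ w a + w b < w a + w h) := by
    rcases d6 with h1 | h1 <;> rcases d7 with h2 | h2
    · exact Or.inl ⟨h1, h2⟩
    · exfalso; linarith
    · exfalso; linarith
    · exact Or.inr ⟨h2, h1⟩
  have Dgb : (w g + w b < w b + w e ∧ w g + w b < w g + w h) ∨
      (w b + w e < w g + w b ∧ w g + w h < w g + w b) := by
    rcases d8 with h1 | h1 <;> rcases d9 with h2 | h2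
    · exact Or.inl ⟨h1, h2⟩
    · exfalso; linarith
    · exfalso; linarith
    · exact Or.inr ⟨h2, h1⟩
  rcases Daf with ⟨p1, p2⟩ | ⟨p1, p2⟩ <;> rcases d3 with q | q <;>
    rcases Dgf with ⟨r1, r2⟩ | ⟨r1, r2⟩ <;> rcases Dah with ⟨u1, u2⟩ | ⟨u1, u2⟩ <;>
    rcases Dgb with ⟨v1, v2⟩ | ⟨v1, v2⟩ <;> linarith
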